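/- Let α ≥ 0 and β > −1 be real numbers with α ≥ β. Then there exists an integer k₀ ≥ 2 such that for all k ≥ k₀, if x* denotes the largest zero in (−1,1) of the Jacobi polynomial P_{k−1}^{(α+1,β+1)}, then P̂_k^{(α,β)}(x*) = min{ P̂_k^{(α,β)}(u) : 0 ≤ u ≤ 1 }. -/

import Mathlib

open Real Filter Topology

/-- Generalized binomial coefficient `C(a, j) = a(a-1)⋯(a-j+1)/j!` for real `a`. -/
noncomputable def genBinom (a : ℝ) (j : ℕ) : ℝ :=
  (∏ i ∈ Finset.range j, (a - i)) / (Nat.factorial j)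

/-- The Jacobi polynomial
`P_k^{(α,β)}(x) = Σ_{m=0}^k C(k+α, k-m)·C(k+β, m)·((x-1)/2)^m·((x+1)/2)^{k-m}`. -/
noncomputable def jacobiP (α β : ℝ) (k : ℕ) (x : ℝ) : ℝ :=
  ∑ m ∈ Finset.range (k + 1),
    genBinom ((k : ℝ) + α) (k - m) * genBinom ((k : ℝ) + β) m *
      ((x - 1) / 2) ^ m * ((x + 1) / 2) ^ (k - m)

/-- The normalized Jacobi polynomial `P̂_k^{(α,β)} = P_k^{(α,β)} / C(k+α, k)`,
so that `P̂_k^{(α,β)}(1) = 1`. -/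
noncomputable def jacobiPN (α β : ℝ) (k : ℕ) (x : ℝ) : ℝ :=
  jacobiP α β k x / genBinom ((k : ℝ) + α) k

lemma genBinom_zero (a : ℝ) : genBinom a 0 = 1 := by simp [genBinom]

lemma genBinom_succ_mul (a : ℝ) (j : ℕ) :
    genBinom a (j + 1) * ((j : ℝ) + 1) = genBinom a j * (a - j) := by
  unfold genBinom
  rw [Finset.prod_range_succ, Nat.factorial_succ]
  have h1 : ((j : ℝ) + 1) ≠ 0 := by positivity
  have h2 : (Nat.factorial j : ℝ) ≠ 0 := by exact_mod_cast Nat.factorial_ne_zero j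
  push_cast
  field_simp

lemma genBinom_pos {a : ℝ} {j : ℕ} (h : ∀ i : ℕ, i < j → 0 < a - i) :
    0 < genBinom a j := by
  apply div_pos
  · exact Finset.prod_pos fun i hi => h i (Finset.mem_range.mp hi)
  · exact_mod_cast Nat.factorial_pos j

lemma jacobiP_eval_one (α β : ℝ) (k : ℕ) :
    jacobiP α β k 1 = genBinom ((k : ℝ) + α) k := by
  unfold jacobiP
  rw [Finset.sum_eq_single 0]
  · simp [genBinom_zero]
  · intro m _ hm0
    simp [zero_pow hm0]
  · intro h
    simp at h

lemma hasDerivAt_jacobiP (α β : ℝ) (n : ℕ) (x : ℝ) :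
    HasDerivAt (jacobiP α β (n + 1))
      ((((n : ℝ) + α + β + 2) / 2) * jacobiP (α + 1) (β + 1) n x) x := by
  have hu : HasDerivAt (fun y : ℝ => (y - 1) / 2) (1 / 2) x := by
    simpa using ((hasDerivAt_id x).sub_const (1:ℝ)).div_const 2
  have hv : HasDerivAt (fun y : ℝ => (y + 1) / 2) (1 / 2) x := by
    simpa using ((hasDerivAt_id x).add_const (1:ℝ)).div_const 2
  have key : ∀ m ∈ Finset.range (n + 1 + 1), HasDerivAt
      (fun y : ℝ => genBinom ((n+1 : ℕ) + α) (n + 1 - m) * genBinom ((n+1 : ℕ) + β) m *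
        ((y - 1) / 2) ^ m * ((y + 1) / 2) ^ (n + 1 - m))
      (genBinom ((n+1 : ℕ) + α) (n + 1 - m) * genBinom ((n+1 : ℕ) + β) m *
          ((m : ℝ) * ((x - 1) / 2) ^ (m - 1) * (1 / 2)) * ((x + 1) / 2) ^ (n + 1 - m)
        + genBinom ((n+1 : ℕ) + α) (n + 1 - m) * genBinom ((n+1 : ℕ) + β) m *
          ((x - 1) / 2) ^ m *
          (((n + 1 - m : ℕ) : ℝ) * ((x + 1) / 2) ^ (n + 1 - m - 1) * (1 / 2))) x := by
    intro m _
    exact ((hu.pow m).const_mul _).mul (hv.pow (n + 1 - m))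
  have hsum := HasDerivAt.fun_sum key
  have hfun : (fun y : ℝ => ∑ m ∈ Finset.range (n + 1 + 1),
      genBinom ((n+1 : ℕ) + α) (n + 1 - m) * genBinom ((n+1 : ℕ) + β) m *
        ((y - 1) / 2) ^ m * ((y + 1) / 2) ^ (n + 1 - m)) = jacobiP α β (n + 1) := by
    funext y
    unfold jacobiP
    norm_num
  rw [hfun] at hsum
  convert hsum using 1 <;> try with_reducible_and_instances rfl
  -- now prove the sum identity
  set u : ℝ := (x - 1) / 2 with hudef
  set v : ℝ := (x + 1) / 2 with hvdef
  rw [Finset.sum_add_distrib]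
  rw [Finset.sum_range_succ' (fun m => genBinom ((n+1 : ℕ) + α) (n + 1 - m) *
        genBinom ((n+1 : ℕ) + β) m * ((m : ℝ) * u ^ (m - 1) * (1 / 2)) * v ^ (n + 1 - m))]
  rw [Finset.sum_range_succ (fun m => genBinom ((n+1 : ℕ) + α) (n + 1 - m) *
        genBinom ((n+1 : ℕ) + β) m * u ^ m *
        (((n + 1 - m : ℕ) : ℝ) * v ^ (n + 1 - m - 1) * (1 / 2)))]
  norm_num
  rw [← Finset.sum_add_distrib]
  unfold jacobiP
  rw [Finset.mul_sum]
  refine Finset.sum_congr rfl fun m hm => ?_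
  have hmn : m ≤ n := by
    have := Finset.mem_range.mp hm; omega
  have e1 : n + 1 - (m + 1) = n - m := by omega
  have e2 : n + 1 - m - 1 = n - m := by omega
  have e3 : n + 1 - m = (n - m) + 1 := by omega
  have c1 : ((n + 1 - m : ℕ) : ℝ) = (n : ℝ) + 1 - m := by
    rw [Nat.cast_sub (by omega)]; push_cast; ring
  have c2 : ((n - m : ℕ) : ℝ) = (n : ℝ) - m := by
    rw [Nat.cast_sub hmn]
  have e4 : ((n : ℝ) + (α + 1)) = ((n:ℝ) + 1) + α := by ring
  have e5 : ((n : ℝ) + (β + 1)) = ((n:ℝ) + 1) + β := by ring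
  have c1 : ((n - m + 1 : ℕ) : ℝ) = (n : ℝ) - m + 1 := by
    rw [Nat.cast_add, Nat.cast_sub hmn]; norm_num
  rw [e1, e2, e3, e4, e5, c1, ← hudef, ← hvdef]
  have ha := genBinom_succ_mul (((n:ℝ) + 1) + α) (n - m)
  have hb := genBinom_succ_mul (((n:ℝ) + 1) + β) m
  rw [c2] at ha
  linear_combination (-(u ^ m * v ^ (n - m) / 2) * genBinom (((n:ℝ) + 1) + α) (n - m)) * hb
    + (-(u ^ m * v ^ (n - m) / 2) * genBinom (((n:ℝ) + 1) + β) m) * ha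

lemma jacobiP_lower (α β : ℝ) (n : ℕ) (x : ℝ) :
    (1 - x^2) * ((((n:ℝ) + α + β + 4) / 2) * jacobiP (α+2) (β+2) n x)
      + (β - α - (α+β+2)*x) * jacobiP (α+1) (β+1) (n+1) x
      + 2*((n:ℝ)+2) * jacobiP α β (n+2) x = 0 := by
  set u : ℝ := (x - 1) / 2 with hudef
  set v : ℝ := (x + 1) / 2 with hvdef
  set a : ℝ := (n : ℝ) + α + 2 with hadef
  set b : ℝ := (n : ℝ) + β + 2 with hbdef
  have hR : jacobiP (α+2) (β+2) n x
      = ∑ j ∈ Finset.range (n+1), genBinom a (n - j) * genBinom b j * u^j * v^(n-j) := by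
    unfold jacobiP
    refine Finset.sum_congr rfl fun j _ => ?_
    rw [show (n:ℝ) + (α+2) = a from by rw [hadef]; ring,
        show (n:ℝ) + (β+2) = b from by rw [hbdef]; ring, ← hudef, ← hvdef]
  have hQ : jacobiP (α+1) (β+1) (n+1) x
      = ∑ j ∈ Finset.range (n+2), genBinom a (n+1-j) * genBinom b j * u^j * v^(n+1-j) := by
    unfold jacobiP
    refine Finset.sum_congr rfl fun j _ => ?_
    rw [show ((n+1:ℕ):ℝ) + (α+1) = a from by push_cast [hadef]; ring,
        show ((n+1:ℕ):ℝ) + (β+1) = b from by push_cast [hbdef]; ring, ← hudef, ← hvdef]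
  have hf : jacobiP α β (n+2) x
      = ∑ j ∈ Finset.range (n+3), genBinom a (n+2-j) * genBinom b j * u^j * v^(n+2-j) := by
    unfold jacobiP
    refine Finset.sum_congr rfl fun j _ => ?_
    rw [show ((n+2:ℕ):ℝ) + α = a from by push_cast [hadef]; ring,
        show ((n+2:ℕ):ℝ) + β = b from by push_cast [hbdef]; ring, ← hudef, ← hvdef]
  rw [hR, hQ, hf]
  have h1 : (1 - x^2) = -4 * u * v := by rw [hudef, hvdef]; ring
  have h2 : (β - α - (α+β+2)*x) = -2*(β+1)*u - 2*(α+1)*v := by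
    rw [hudef, hvdef]; ring
  rw [h1, h2]
  -- expand into four sums
  have E1 : (-4 * u * v) * ((((n:ℝ) + α + β + 4) / 2) *
        ∑ j ∈ Finset.range (n+1), genBinom a (n - j) * genBinom b j * u^j * v^(n-j))
      = ∑ j ∈ Finset.range (n+1),
          (-2*((n:ℝ) + α + β + 4)) * (genBinom a (n - j) * genBinom b j) * (u^(j+1) * v^(n+1-j)) := by
    rw [Finset.mul_sum, Finset.mul_sum]
    refine Finset.sum_congr rfl fun j hj => ?_
    rw [show n+1-j = (n-j)+1 from by have := Finset.mem_range.mp hj; omega]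
    ring
  have E23 : (-2*(β+1)*u - 2*(α+1)*v) *
        ∑ j ∈ Finset.range (n+2), genBinom a (n+1-j) * genBinom b j * u^j * v^(n+1-j)
      = (∑ j ∈ Finset.range (n+2),
          (-2*(β+1)) * (genBinom a (n+1-j) * genBinom b j) * (u^(j+1) * v^(n+1-j)))
        + (∑ j ∈ Finset.range (n+2),
          (-2*(α+1)) * (genBinom a (n+1-j) * genBinom b j) * (u^j * v^(n+2-j))) := by
    rw [← Finset.sum_add_distrib, Finset.mul_sum]
    refine Finset.sum_congr rfl fun j hj => ?_
    rw [show n+2-j = (n+1-j)+1 from by have := Finset.mem_range.mp hj; omega]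
    ring
  have E4 : 2*((n:ℝ)+2) *
        ∑ j ∈ Finset.range (n+3), genBinom a (n+2-j) * genBinom b j * u^j * v^(n+2-j)
      = ∑ j ∈ Finset.range (n+3),
          (2*((n:ℝ)+2)) * (genBinom a (n+2-j) * genBinom b j) * (u^j * v^(n+2-j)) := by
    rw [Finset.mul_sum]
    refine Finset.sum_congr rfl fun j _ => ?_
    ring
  rw [E1, E23, E4]
  have E2' : (∑ j ∈ Finset.range (n+2),
        (-2*(β+1)) * (genBinom a (n+1-j) * genBinom b j) * (u^(j+1) * v^(n+1-j)))
      = (∑ j ∈ Finset.range (n+1),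
          (-2*(β+1)) * (genBinom a (n+1-j) * genBinom b j) * (u^(j+1) * v^(n+1-j)))
        + (-2*(β+1)) * (genBinom a 0 * genBinom b (n+1)) * (u^(n+2) * v^0) := by
    rw [Finset.sum_range_succ
      (fun j => (-2*(β+1)) * (genBinom a (n+1-j) * genBinom b j) * (u^(j+1) * v^(n+1-j))) (n+1)]
    norm_num
  have E3' : (∑ j ∈ Finset.range (n+2),
        (-2*(α+1)) * (genBinom a (n+1-j) * genBinom b j) * (u^j * v^(n+2-j)))
      = (∑ j ∈ Finset.range (n+1),
          (-2*(α+1)) * (genBinom a (n-j) * genBinom b (j+1)) * (u^(j+1) * v^(n+1-j)))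
        + (-2*(α+1)) * (genBinom a (n+1) * genBinom b 0) * (u^0 * v^(n+2)) := by
    rw [Finset.sum_range_succ'
      (fun j => (-2*(α+1)) * (genBinom a (n+1-j) * genBinom b j) * (u^j * v^(n+2-j))) (n+1)]
    congr 1
    refine Finset.sum_congr rfl fun j hj => ?_
    have h1 : n+1-(j+1) = n-j := by omega
    have h2 : n+2-(j+1) = n+1-j := by omega
    rw [h1, h2]
  have E4' : (∑ j ∈ Finset.range (n+3),
        (2*((n:ℝ)+2)) * (genBinom a (n+2-j) * genBinom b j) * (u^j * v^(n+2-j)))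
      = ((∑ j ∈ Finset.range (n+1),
          (2*((n:ℝ)+2)) * (genBinom a (n+1-j) * genBinom b (j+1)) * (u^(j+1) * v^(n+1-j)))
        + (2*((n:ℝ)+2)) * (genBinom a 0 * genBinom b (n+2)) * (u^(n+2) * v^0))
        + (2*((n:ℝ)+2)) * (genBinom a (n+2) * genBinom b 0) * (u^0 * v^(n+2)) := by
    rw [Finset.sum_range_succ'
      (fun j => (2*((n:ℝ)+2)) * (genBinom a (n+2-j) * genBinom b j) * (u^j * v^(n+2-j))) (n+2)]
    congr 1
    rw [Finset.sum_range_succ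
      (fun j => (2*((n:ℝ)+2)) * (genBinom a (n+2-(j+1)) * genBinom b (j+1)) * (u^(j+1) * v^(n+2-(j+1)))) (n+1)]
    congr 1
    · refine Finset.sum_congr rfl fun j hj => ?_
      have h1 : n+2-(j+1) = n+1-j := by omega
      rw [h1]
    · norm_num
  rw [E2', E3', E4']
  have hjle : ∀ j, j ∈ Finset.range (n+1) → j ≤ n := fun j hj => by
    have := Finset.mem_range.mp hj; omega
  have hmain : ∀ j ∈ Finset.range (n+1),
      (-2*((n:ℝ) + α + β + 4)) * (genBinom a (n - j) * genBinom b j) * (u^(j+1) * v^(n+1-j))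
       + (-2*(β+1)) * (genBinom a (n+1-j) * genBinom b j) * (u^(j+1) * v^(n+1-j))
       + (-2*(α+1)) * (genBinom a (n-j) * genBinom b (j+1)) * (u^(j+1) * v^(n+1-j))
       + (2*((n:ℝ)+2)) * (genBinom a (n+1-j) * genBinom b (j+1)) * (u^(j+1) * v^(n+1-j)) = 0 := by
    intro j hj
    have hjn : j ≤ n := hjle j hj
    have hp : ((n:ℝ) - j + 1) ≠ 0 := by
      have : (j:ℝ) ≤ n := by exact_mod_cast hjn
      nlinarith
    have hr : ((j:ℝ) + 1) ≠ 0 := by positivity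
    have ha' := genBinom_succ_mul a (n-j)
    rw [show (n-j)+1 = n+1-j from by omega,
        show ((n-j:ℕ):ℝ) = (n:ℝ)-j from Nat.cast_sub hjn] at ha'
    have hb' := genBinom_succ_mul b j
    have hX : genBinom a (n+1-j) = genBinom a (n-j) * (a - ((n:ℝ)-j)) / ((n:ℝ)-j+1) := by
      rw [eq_div_iff hp]; linarith [ha']
    have hY : genBinom b (j+1) = genBinom b j * (b - (j:ℝ)) / ((j:ℝ)+1) := by
      rw [eq_div_iff hr]; linarith [hb']
    rw [hX, hY, hadef, hbdef]
    field_simp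
    ring
  have hb1 : (-2*(α+1)) * (genBinom a (n+1) * genBinom b 0) * (u^0 * v^(n+2))
      + (2*((n:ℝ)+2)) * (genBinom a (n+2) * genBinom b 0) * (u^0 * v^(n+2)) = 0 := by
    have h := genBinom_succ_mul a (n+1)
    push_cast at h
    simp only [genBinom_zero, mul_one, pow_zero, one_mul]
    rw [hadef] at h ⊢
    linear_combination (2*v^(n+2)) * h
  have hb2 : (-2*(β+1)) * (genBinom a 0 * genBinom b (n+1)) * (u^(n+2) * v^0)
      + (2*((n:ℝ)+2)) * (genBinom a 0 * genBinom b (n+2)) * (u^(n+2) * v^0) = 0 := by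
    have h := genBinom_succ_mul b (n+1)
    push_cast at h
    simp only [genBinom_zero, mul_one, pow_zero, one_mul]
    rw [hbdef] at h ⊢
    linear_combination (2*u^(n+2)) * h
  have hZ : (∑ j ∈ Finset.range (n+1),
        (-2*((n:ℝ) + α + β + 4)) * (genBinom a (n - j) * genBinom b j) * (u^(j+1) * v^(n+1-j)))
      + (∑ j ∈ Finset.range (n+1),
        (-2*(β+1)) * (genBinom a (n+1-j) * genBinom b j) * (u^(j+1) * v^(n+1-j)))
      + (∑ j ∈ Finset.range (n+1),
        (-2*(α+1)) * (genBinom a (n-j) * genBinom b (j+1)) * (u^(j+1) * v^(n+1-j)))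
      + (∑ j ∈ Finset.range (n+1),
        (2*((n:ℝ)+2)) * (genBinom a (n+1-j) * genBinom b (j+1)) * (u^(j+1) * v^(n+1-j))) = 0 := by
    rw [← Finset.sum_add_distrib, ← Finset.sum_add_distrib, ← Finset.sum_add_distrib]
    exact Finset.sum_eq_zero hmain
  linarith [hZ, hb1, hb2]


lemma continuous_jacobiP (α β : ℝ) (k : ℕ) : Continuous (jacobiP α β k) := by
  unfold jacobiP
  exact continuous_finset_sum _ fun m _ => by fun_prop

lemma sturm_no_pos (aa om lam : ℝ) (p dp w y dy : ℝ → ℝ)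
    (hom : 0 < om)
    (hy : ∀ x ∈ Set.Icc aa (aa + π / om), HasDerivAt y (dy x) x)
    (hp : ∀ x ∈ Set.Icc aa (aa + π / om), HasDerivAt p (dp x) x)
    (hpdy : ∀ x ∈ Set.Icc aa (aa + π / om),
      HasDerivAt (fun t => p t * dy t) (-(lam * w x * y x)) x)
    (hE : ∀ x ∈ Set.Ioo aa (aa + π / om),
      0 < dp x * (2 * om * Real.sin (om * (x - aa)) * Real.cos (om * (x - aa)))
          + p x * (2 * om ^ 2 * (Real.cos (om * (x - aa)) ^ 2 - Real.sin (om * (x - aa)) ^ 2))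
          + lam * w x * Real.sin (om * (x - aa)) ^ 2)
    (hypos : ∀ x ∈ Set.Ioo aa (aa + π / om), 0 < y x) : False := by
  set bb := aa + π / om with hbb
  have haab : aa < bb := by
    rw [hbb]
    have : 0 < π / om := div_pos Real.pi_pos hom
    linarith
  set W : ℝ → ℝ := fun t =>
    y t * (p t * (2 * om * Real.sin (om * (t - aa)) * Real.cos (om * (t - aa))))
      - (p t * dy t) * Real.sin (om * (t - aa)) ^ 2 with hWdef
  have hinner : ∀ t : ℝ, HasDerivAt (fun s => om * (s - aa)) om t := by
    intro t
    simpa using ((hasDerivAt_id t).sub_const aa).const_mul om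
  have hsin : ∀ t : ℝ, HasDerivAt (fun s => Real.sin (om * (s - aa)))
      (Real.cos (om * (t - aa)) * om) t := fun t =>
    (Real.hasDerivAt_sin _).comp t (hinner t)
  have hcos : ∀ t : ℝ, HasDerivAt (fun s => Real.cos (om * (s - aa)))
      (-Real.sin (om * (t - aa)) * om) t := fun t =>
    (Real.hasDerivAt_cos _).comp t (hinner t)
  have hW : ∀ x ∈ Set.Icc aa bb, HasDerivAt W
      (y x * (dp x * (2 * om * Real.sin (om * (x - aa)) * Real.cos (om * (x - aa)))
          + p x * (2 * om ^ 2 * (Real.cos (om * (x - aa)) ^ 2 - Real.sin (om * (x - aa)) ^ 2))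
          + lam * w x * Real.sin (om * (x - aa)) ^ 2)) x := by
    intro x hx
    have hsc : HasDerivAt (fun t => p t * (2 * om * Real.sin (om * (t - aa)) * Real.cos (om * (t - aa))))
        (dp x * (2 * om * Real.sin (om * (x - aa)) * Real.cos (om * (x - aa)))
          + p x * (2 * om ^ 2 * (Real.cos (om * (x - aa)) ^ 2 - Real.sin (om * (x - aa)) ^ 2))) x := by
      have h1 : HasDerivAt (fun t => 2 * om * Real.sin (om * (t - aa)) * Real.cos (om * (t - aa)))
          (2 * om * (Real.cos (om * (x - aa)) * om) * Real.cos (om * (x - aa))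
            + 2 * om * Real.sin (om * (x - aa)) * (-Real.sin (om * (x - aa)) * om)) x :=
        (((hsin x).const_mul (2 * om)).mul (hcos x))
      have := (hp x hx).mul h1
      convert this using 1 <;> try with_reducible_and_instances rfl
      ring
    have h2 : HasDerivAt (fun t => (p t * dy t) * Real.sin (om * (t - aa)) ^ 2)
        ((-(lam * w x * y x)) * Real.sin (om * (x - aa)) ^ 2
          + (p x * dy x) * (2 * Real.sin (om * (x - aa)) ^ 1 * (Real.cos (om * (x - aa)) * om))) x :=
      (hpdy x hx).mul ((hsin x).pow 2)
    have := ((hy x hx).mul hsc).sub h2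
    convert this using 1 <;> try with_reducible_and_instances rfl
    ring
  have hmono : StrictMonoOn W (Set.Icc aa bb) := by
    apply strictMonoOn_of_deriv_pos (convex_Icc aa bb)
    · exact fun x hx => (hW x hx).continuousAt.continuousWithinAt
    · intro x hx
      rw [interior_Icc] at hx
      rw [(hW x (Set.Ioo_subset_Icc_self hx)).deriv]
      exact mul_pos (hypos x hx) (hE x hx)
  have hWa : W aa = 0 := by
    rw [hWdef]
    simp
  have hWb : W bb = 0 := by
    have hombb : om * (bb - aa) = π := by
      rw [hbb]
      field_simp
      ring
    rw [hWdef]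
    simp only [hombb, Real.sin_pi]
    ring
  have := hmono (Set.left_mem_Icc.mpr haab.le) (Set.right_mem_Icc.mpr haab.le) haab
  rw [hWa, hWb] at this
  exact lt_irrefl 0 this

lemma key_ineq (M0 om lam D X s c : ℝ) (hM09 : 9 ≤ M0) (homd : om = 2*M0+7)
    (hD1 : -M0 ≤ D) (hD2 : D ≤ M0) (hX1 : 3/4 ≤ X) (hX2 : X ≤ 1)
    (hsc : s^2 + c^2 = 1) (hlam : 8*M0*om + 8*om^2 < lam) :
    0 < D * (2*om*s*c) + X * (2*om^2*(c^2-s^2)) + lam * s^2 := by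
  have hom : (0:ℝ) < om := by linarith
  have hM0om : (0:ℝ) < M0*om := mul_pos (by linarith) hom
  have homsq : om^2 = 2*M0*om + 7*om := by rw [homd]; ring
  have hlampos : 0 < lam := by linarith [hM0om, homsq]
  have hsc1 : 2*(s*c) ≤ 1 := by linarith [sq_nonneg (s-c)]
  have hsc2 : -1 ≤ 2*(s*c) := by linarith [sq_nonneg (s+c)]
  have k1 : 0 ≤ (M0 - D)*(1 - 2*(s*c)) := mul_nonneg (by linarith) (by linarith)
  have k2 : 0 ≤ (M0 + D)*(1 + 2*(s*c)) := mul_nonneg (by linarith) (by linarith)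
  have hDsc : -M0 ≤ D*(2*(s*c)) := by linarith [k1, k2]
  have hDso : om * (-M0) ≤ om * (D*(2*(s*c))) := mul_le_mul_of_nonneg_left hDsc hom.le
  have hs2 : (0:ℝ) ≤ s^2 := sq_nonneg s
  have hc2 : (0:ℝ) ≤ c^2 := sq_nonneg c
  have hcsl : -1 ≤ c^2 - s^2 := by linarith
  have hcsu : c^2 - s^2 ≤ 1 := by linarith
  have hX0 : (0:ℝ) ≤ X := by linarith
  rcases le_or_gt (1/4 : ℝ) (s^2) with hcase | hcase
  · -- big sine: lam term dominates
    have hl4 : lam/4 ≤ lam * s^2 := by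
      linarith [mul_nonneg hlampos.le (by linarith : (0:ℝ) ≤ s^2 - 1/4)]
    have hXcs : -X ≤ X*(c^2-s^2) := by
      have := mul_le_mul_of_nonneg_left hcsl hX0
      linarith [this]
    have hB : (2*om^2) * (-X) ≤ (2*om^2) * (X*(c^2-s^2)) :=
      mul_le_mul_of_nonneg_left (by linarith) (by positivity)
    have hXom : (2*om^2) * (-X) ≥ -(2*om^2) := by
      linarith [mul_le_mul_of_nonneg_left hX2 (by positivity : (0:ℝ) ≤ 2*om^2)]
    linarith [hDso, hB, hXom, hl4, hlam, hM0om]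
  · -- small sine: om^2 term dominates
    have hcs : 1/2 ≤ c^2 - s^2 := by linarith
    have hXcs : 3/8 ≤ X*(c^2-s^2) := by
      linarith [mul_nonneg (by linarith : (0:ℝ) ≤ X - 3/4) (by linarith : (0:ℝ) ≤ c^2 - s^2 - 1/2)]
    have hB : (2*om^2) * (3/8) ≤ (2*om^2) * (X*(c^2-s^2)) :=
      mul_le_mul_of_nonneg_left hXcs (by positivity)
    have hlamsq : 0 ≤ lam * s^2 := mul_nonneg hlampos.le hs2
    linarith [hDso, hB, hlamsq, homsq, hM0om, hom]

set_option maxHeartbeats 2000000 in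
lemma exists_jacobi_zero (α β : ℝ) (hα : 0 ≤ α) (hβ : -1 < β) (n : ℕ)
    (hn : 8*(4*(α+2)+(β+2))*(2*(4*(α+2)+(β+2))+7) + 8*(2*(4*(α+2)+(β+2))+7)^2
      < (n:ℝ)+2) :
    ∃ z ∈ Set.Ioo (0:ℝ) 1, jacobiP (α+1) (β+1) (n+2) z = 0 := by
  by_contra hcon
  push_neg at hcon
  set M0 : ℝ := 4*(α+2)+(β+2) with hM0def
  set om : ℝ := 2*M0 + 7 with homdef
  have hM09 : 9 ≤ M0 := by rw [hM0def]; linarith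
  have hom : 0 < om := by rw [homdef]; linarith
  set aa : ℝ := 1/4 with haadef
  set bb : ℝ := aa + π / om with hbbdef
  clear_value M0 om aa bb
  have hpiom : π / om < 1/4 := by
    rw [div_lt_iff₀ hom]
    have h315 := Real.pi_lt_d2
    have : (25:ℝ) ≤ om := by rw [homdef]; linarith
    linarith
  have haab : aa < bb := by
    have : 0 < π / om := div_pos Real.pi_pos hom
    rw [hbbdef, haadef]; linarith
  have hbb12 : bb < 1/2 := by rw [hbbdef, haadef]; linarith
  have hIccsub : Set.Icc aa bb ⊆ Set.Ioo (0:ℝ) 1 := by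
    intro x hx
    have h1 := hx.1
    have h2 := lt_of_le_of_lt hx.2 hbb12
    rw [haadef] at h1
    exact ⟨by linarith, by linarith⟩
  -- the solution and its derivatives
  set Q : ℝ → ℝ := jacobiP (α+1) (β+1) (n+2) with hQdef
  set R : ℝ → ℝ := jacobiP (α+2) (β+2) (n+1) with hRdef
  set T : ℝ → ℝ := jacobiP (α+3) (β+3) n with hTdef
  set c2 : ℝ := ((n:ℝ)+α+β+5)/2 with hc2def
  set c3 : ℝ := ((n:ℝ)+α+β+6)/2 with hc3def
  set lam : ℝ := ((n:ℝ)+2)*((n:ℝ)+α+β+5) with hlamdef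
  clear_value Q R T c2 c3 lam
  have hQ' : ∀ x : ℝ, HasDerivAt Q (c2 * R x) x := by
    intro x
    have h := hasDerivAt_jacobiP (α+1) (β+1) (n+1) x
    rw [show (α+1)+1 = α+2 from by ring, show (β+1)+1 = β+2 from by ring] at h
    rw [hQdef, hRdef, hc2def]
    convert h using 2
    push_cast; ring
  have hR' : ∀ x : ℝ, HasDerivAt R (c3 * T x) x := by
    intro x
    have h := hasDerivAt_jacobiP (α+2) (β+2) n x
    rw [show (α+2)+1 = α+3 from by ring, show (β+2)+1 = β+3 from by ring] at h
    rw [hRdef, hTdef, hc3def]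
    convert h using 2
    push_cast; ring
  have hODEQ : ∀ x : ℝ, (1-x^2)*(c3 * T x) + ((β-α) - (α+β+4)*x)*R x
      + 2*((n:ℝ)+2)*Q x = 0 := by
    intro x
    have h := jacobiP_lower (α+1) (β+1) n x
    rw [show (α+1)+2 = α+3 from by ring, show (β+1)+2 = β+3 from by ring,
        show (α+1)+1 = α+2 from by ring, show (β+1)+1 = β+2 from by ring] at h
    rw [hc3def, hQdef, hRdef, hTdef]
    linear_combination h
  -- self-adjoint weight functions
  set p : ℝ → ℝ := fun t => (1-t) ^ (α+2) * (1+t) ^ (β+2) with hpdef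
  set w : ℝ → ℝ := fun t => (1-t) ^ (α+1) * (1+t) ^ (β+1) with hwdef
  set dp : ℝ → ℝ := fun t =>
    -((α+2) * (1-t)^(α+1) * (1+t)^(β+2)) + (β+2) * (1-t)^(α+2) * (1+t)^(β+1) with hdpdef
  clear_value p w dp
  have hx1pos : ∀ x ∈ Set.Icc aa bb, (0:ℝ) < 1 - x := by
    intro x hx; have := hIccsub hx; rcases this with ⟨_, h2⟩; linarith
  have hx2pos : ∀ x ∈ Set.Icc aa bb, (0:ℝ) < 1 + x := by
    intro x hx; have := hIccsub hx; rcases this with ⟨h1, _⟩; linarith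
  have hp : ∀ x ∈ Set.Icc aa bb, HasDerivAt p (dp x) x := by
    intro x hx
    have h1x := hx1pos x hx
    have h2x := hx2pos x hx
    have hb1 : HasDerivAt (fun t : ℝ => 1 - t) (-1) x := by
      simpa using (hasDerivAt_id x).const_sub (1:ℝ)
    have hb2 : HasDerivAt (fun t : ℝ => 1 + t) 1 x := by
      simpa using (hasDerivAt_id x).const_add (1:ℝ)
    have h1 : HasDerivAt (fun t : ℝ => (1-t)^(α+2)) (-1 * (α+2) * (1-x)^(α+1)) x := by
      have h := hb1.rpow_const (p := α+2) (Or.inl h1x.ne')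
      rw [show α+2-(1:ℝ) = α+1 from by ring] at h
      exact h
    have h2 : HasDerivAt (fun t : ℝ => (1+t)^(β+2)) (1 * (β+2) * (1+x)^(β+1)) x := by
      have h := hb2.rpow_const (p := β+2) (Or.inl h2x.ne')
      rw [show β+2-(1:ℝ) = β+1 from by ring] at h
      exact h
    have hmul := h1.mul h2
    rw [hpdef, hdpdef]
    simp only []
    convert hmul using 1 <;> try with_reducible_and_instances rfl
    ring
  -- p and dp in terms of w
  have hrw1 : ∀ x ∈ Set.Icc aa bb, (1-x) ^ (α+2) = (1-x) ^ (α+1) * (1-x) := by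
    intro x hx
    rw [show (α+2:ℝ) = (α+1)+1 from by ring]
    exact Real.rpow_add_one (hx1pos x hx).ne' (α+1)
  have hrw2 : ∀ x ∈ Set.Icc aa bb, (1+x) ^ (β+2) = (1+x) ^ (β+1) * (1+x) := by
    intro x hx
    rw [show (β+2:ℝ) = (β+1)+1 from by ring]
    exact Real.rpow_add_one (hx2pos x hx).ne' (β+1)
  have hpw : ∀ x ∈ Set.Icc aa bb, p x = w x * ((1-x)*(1+x)) := by
    intro x hx
    rw [hpdef, hwdef]
    simp only []
    rw [hrw1 x hx, hrw2 x hx]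
    ring
  have hdpw : ∀ x ∈ Set.Icc aa bb, dp x = w x * ((β+2)*(1-x) - (α+2)*(1+x)) := by
    intro x hx
    rw [hdpdef, hwdef]
    simp only []
    rw [hrw1 x hx, hrw2 x hx]
    ring
  have hwpos : ∀ x ∈ Set.Icc aa bb, 0 < w x := by
    intro x hx
    rw [hwdef]
    exact mul_pos (Real.rpow_pos_of_pos (hx1pos x hx) _) (Real.rpow_pos_of_pos (hx2pos x hx) _)
  have hlam2 : lam = 2*((n:ℝ)+2)*c2 := by rw [hlamdef, hc2def]; ring
  have hlamlb : 8*M0*om + 8*om^2 < lam := by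
    rw [hlamdef]
    have h1 : (1:ℝ) ≤ (n:ℝ)+α+β+5 := by linarith
    have h2 : (0:ℝ) ≤ (n:ℝ)+2 := by positivity
    have h3 := mul_le_mul_of_nonneg_left h1 h2
    rw [mul_one] at h3
    linarith
  -- derivative of p * Q'
  have hpdy : ∀ x ∈ Set.Icc aa bb, HasDerivAt (fun t => p t * (c2 * R t))
      (-(lam * w x * Q x)) x := by
    intro x hx
    have hd := (hp x hx).mul ((hR' x).const_mul c2)
    convert hd using 1 <;> try with_reducible_and_instances rfl
    rw [hdpw x hx, hpw x hx]
    linear_combination (-(w x * c2)) * hODEQ x + (-(w x * Q x)) * hlam2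
  -- positivity of the comparison expression
  have hE : ∀ x ∈ Set.Ioo aa bb,
      0 < dp x * (2 * om * Real.sin (om * (x - aa)) * Real.cos (om * (x - aa)))
          + p x * (2 * om ^ 2 * (Real.cos (om * (x - aa)) ^ 2 - Real.sin (om * (x - aa)) ^ 2))
          + lam * w x * Real.sin (om * (x - aa)) ^ 2 := by
    intro x hx
    have hxI : x ∈ Set.Icc aa bb := Set.Ioo_subset_Icc_self hx
    clear hpdy hODEQ hQ' hR' hp hcon
    have hx14 : 1/4 ≤ x := by
      have h := hx.1; rw [haadef] at h; linarith
    have hx12 : x ≤ 1/2 := le_of_lt (lt_trans hx.2 hbb12)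
    set s : ℝ := Real.sin (om * (x - aa)) with hsdef
    set c : ℝ := Real.cos (om * (x - aa)) with hcdef
    have hsc : s^2 + c^2 = 1 := Real.sin_sq_add_cos_sq _
    rw [hdpw x hxI, hpw x hxI]
    set D : ℝ := (β+2)*(1-x) - (α+2)*(1+x) with hDdef
    have hb20 : (0:ℝ) ≤ β + 2 := by linarith
    have ha20 : (0:ℝ) ≤ α + 2 := by linarith
    have hDub : D ≤ M0 := by
      rw [hDdef, hM0def]
      have h1 : 0 ≤ (β+2)*x := mul_nonneg hb20 (by linarith)
      have h2 : 0 ≤ (α+2)*(1+x) := mul_nonneg ha20 (by linarith)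
      linarith
    have hDlb : -M0 ≤ D := by
      rw [hDdef, hM0def]
      have h1 : 0 ≤ (β+2)*(1-x) := mul_nonneg hb20 (by linarith)
      have h2 : (α+2)*(1+x) ≤ (α+2)*(3/2) := mul_le_mul_of_nonneg_left (by linarith) ha20
      linarith
    clear_value s c D
    have hwx := hwpos x hxI
    have hxsq : x^2 ≤ 1/4 := by
      have h := mul_le_mul hx12 hx12 (by linarith : (0:ℝ) ≤ x) (by norm_num : (0:ℝ) ≤ (1/2:ℝ))
      nlinarith [h]
    have hX1 : 3/4 ≤ (1-x)*(1+x) := by nlinarith [hxsq]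
    have hX2 : (1-x)*(1+x) ≤ 1 := by nlinarith [sq_nonneg x]
    have key := key_ineq M0 om lam D ((1-x)*(1+x)) s c hM09 homdef hDlb hDub hX1 hX2 hsc hlamlb
    calc (0:ℝ) < w x * (D * (2 * om * s * c) + ((1-x)*(1+x)) * (2 * om^2 * (c^2 - s^2)) + lam * s^2) :=
          mul_pos hwx key
      _ = w x * D * (2 * om * s * c) + w x * ((1-x)*(1+x)) * (2 * om ^ 2 * (c^2 - s^2))
          + lam * w x * s^2 := by ring
  -- Q has no zero on [aa,bb], hence fixed sign
  have hne : ∀ x ∈ Set.Icc aa bb, Q x ≠ 0 := by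
    intro x hx
    exact hcon x (hIccsub hx)
  have hQcont : Continuous Q := by rw [hQdef]; exact continuous_jacobiP _ _ _
  have hIcc' : Set.Icc aa (aa + π/om) = Set.Icc aa bb := by rw [hbbdef]
  have hIoo' : Set.Ioo aa (aa + π/om) = Set.Ioo aa bb := by rw [hbbdef]
  have haaI : aa ∈ Set.Icc aa bb := Set.left_mem_Icc.mpr haab.le
  rcases (hne aa haaI).lt_or_gt with hneg | hpos
  · -- Q < 0 on the interval; apply Sturm to -Q
    have hyneg : ∀ x ∈ Set.Ioo aa bb, 0 < -Q x := by
      intro x hx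
      by_contra hc
      push_neg at hc
      have hQx : 0 < Q x := by
        rcases (hne x (Set.Ioo_subset_Icc_self hx)).lt_or_gt with h | h
        · linarith
        · exact h
      obtain ⟨z, hz, hz0⟩ := intermediate_value_Icc hx.1.le hQcont.continuousOn
        (⟨hneg.le, hQx.le⟩ : (0:ℝ) ∈ Set.Icc (Q aa) (Q x))
      exact hne z ⟨hz.1, le_trans hz.2 hx.2.le⟩ hz0
    refine sturm_no_pos aa om lam p dp w (fun t => -Q t) (fun t => -(c2 * R t)) hom
      (fun x hx => ((hQ' x).neg)) (fun x hx => hp x (hIcc' ▸ hx)) ?_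
      (fun x hx => hE x (hIoo' ▸ hx)) (fun x hx => hyneg x (hIoo' ▸ hx))
    intro x hx
    have h0 := hpdy x (hIcc' ▸ hx)
    have hfun : (fun t => p t * -(c2 * R t)) = (fun t => -(p t * (c2 * R t))) := by
      funext t; ring
    rw [hfun]
    have := h0.neg
    convert this using 1 <;> try with_reducible_and_instances rfl
    ring
  · -- Q > 0 on the interval
    have hypos : ∀ x ∈ Set.Ioo aa bb, 0 < Q x := by
      intro x hx
      by_contra hc
      push_neg at hc
      have hQx : Q x < 0 := by
        rcases (hne x (Set.Ioo_subset_Icc_self hx)).lt_or_gt with h | h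
        · exact h
        · linarith
      obtain ⟨z, hz, hz0⟩ := intermediate_value_Icc' hx.1.le hQcont.continuousOn
        (⟨hQx.le, hpos.le⟩ : (0:ℝ) ∈ Set.Icc (Q x) (Q aa))
      exact hne z ⟨hz.1, le_trans hz.2 hx.2.le⟩ hz0
    exact sturm_no_pos aa om lam p dp w Q (fun t => c2 * R t) hom
      (fun x hx => hQ' x) (fun x hx => hp x (hIcc' ▸ hx)) (fun x hx => hpdy x (hIcc' ▸ hx))
      (fun x hx => hE x (hIoo' ▸ hx)) (fun x hx => hypos x (hIoo' ▸ hx))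

set_option maxHeartbeats 2000000 in
theorem jacobi_min_at_last_extremum
    (α β : ℝ) (hα : 0 ≤ α) (hβ : -1 < β) (hαβ : β ≤ α) :
    ∃ k₀ : ℕ, 2 ≤ k₀ ∧ ∀ k, k₀ ≤ k → ∀ xstar : ℝ,
      IsGreatest {y | y ∈ Set.Ioo (-1 : ℝ) 1 ∧ jacobiP (α + 1) (β + 1) (k - 1) y = 0}
        xstar →
      IsLeast (jacobiPN α β k '' Set.Icc (0 : ℝ) 1) (jacobiPN α β k xstar) := by
  set C0 : ℝ := 8*(4*(α+2)+(β+2))*(2*(4*(α+2)+(β+2))+7) + 8*(2*(4*(α+2)+(β+2))+7)^2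
    with hC0def
  refine ⟨max 3 (⌈C0⌉₊ + 2), le_trans (by norm_num) (le_max_left _ _), ?_⟩
  intro k hk xstar hxstar
  obtain ⟨n, rfl⟩ : ∃ n, k = n + 3 := ⟨k - 3, by
    have := le_trans (le_max_left 3 (⌈C0⌉₊ + 2)) hk; omega⟩
  have hkC : C0 < (n:ℝ) + 2 := by
    have h1 : (⌈C0⌉₊ + 2 : ℕ) ≤ n + 3 := le_trans (le_max_right _ _) hk
    have h2 : C0 ≤ (⌈C0⌉₊ : ℝ) := Nat.le_ceil C0
    have h3 : ((⌈C0⌉₊ : ℕ) : ℝ) ≤ (n:ℝ) + 1 := by exact_mod_cast by omega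
    linarith
  have hk1 : n + 3 - 1 = n + 2 := by omega
  rw [hk1] at hxstar
  -- notation
  set f : ℝ → ℝ := jacobiP α β (n+3) with hfdef
  set Q : ℝ → ℝ := jacobiP (α+1) (β+1) (n+2) with hQdef
  set R : ℝ → ℝ := jacobiP (α+2) (β+2) (n+1) with hRdef
  set c1 : ℝ := ((n:ℝ)+α+β+4)/2 with hc1def
  set c2 : ℝ := ((n:ℝ)+α+β+5)/2 with hc2def
  set lamf : ℝ := ((n:ℝ)+3)*((n:ℝ)+α+β+4) with hlamfdef
  have hxmem : xstar ∈ Set.Ioo (-1:ℝ) 1 := hxstar.1.1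
  have hxQ : Q xstar = 0 := hxstar.1.2
  have hub : ∀ y, y ∈ Set.Ioo (-1:ℝ) 1 → Q y = 0 → y ≤ xstar := by
    intro y h1 h2
    exact hxstar.2 ⟨h1, h2⟩
  clear_value Q
  have hf' : ∀ x : ℝ, HasDerivAt f (c1 * Q x) x := by
    intro x
    have h := hasDerivAt_jacobiP α β (n+2) x
    rw [hfdef, hQdef, hc1def]
    convert h using 2
    push_cast; ring
  have hQ' : ∀ x : ℝ, HasDerivAt Q (c2 * R x) x := by
    intro x
    have h := hasDerivAt_jacobiP (α+1) (β+1) (n+1) x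
    rw [show (α+1)+1 = α+2 from by ring, show (β+1)+1 = β+2 from by ring] at h
    rw [hQdef, hRdef, hc2def]
    convert h using 2
    push_cast; ring
  have hODEf : ∀ x : ℝ, (1-x^2)*(c2 * R x) + (β-α-(α+β+2)*x)*Q x
      + 2*((n:ℝ)+3)*f x = 0 := by
    intro x
    have h := jacobiP_lower α β (n+1) x
    rw [hfdef, hQdef, hRdef, hc2def]
    push_cast at h
    linear_combination h
  have hQcont : Continuous Q := by rw [hQdef]; exact continuous_jacobiP _ _ _
  have hQ1pos : 0 < Q 1 := by
    rw [hQdef, jacobiP_eval_one]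
    apply genBinom_pos
    intro i hi
    have : (i:ℝ) ≤ (n:ℝ) + 1 := by exact_mod_cast by omega
    push_cast
    linarith
  clear_value f R c1 c2 lamf
  have hn0 : (0:ℝ) ≤ (n:ℝ) := Nat.cast_nonneg n
  have hc1pos : 0 < c1 := by rw [hc1def]; linarith
  have hc2pos : 0 < c2 := by rw [hc2def]; linarith
  have hlamfpos : 0 < lamf := by
    rw [hlamfdef]; apply mul_pos <;> linarith
  have hlamf2 : lamf = 2*((n:ℝ)+3)*c1 := by rw [hlamfdef, hc1def]; ring
  -- xstar is positive
  obtain ⟨z, hz01, hzQ⟩ := exists_jacobi_zero α β hα hβ n (by rw [← hC0def]; exact hkC)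
  have hzQ' : Q z = 0 := by rw [hQdef]; exact hzQ
  have hxpos : 0 < xstar :=
    lt_of_lt_of_le hz01.1 (hub z ⟨by linarith [hz01.1], hz01.2⟩ hzQ')
  have hxlt1 : xstar < 1 := hxmem.2
  -- Q is positive on (xstar, 1)
  have hQpos : ∀ u ∈ Set.Ioo xstar 1, 0 < Q u := by
    intro u hu
    rcases lt_trichotomy (Q u) 0 with h | h | h
    · exfalso
      obtain ⟨d, hd, hdQ⟩ := intermediate_value_Ioo hu.2.le hQcont.continuousOn
        (⟨h, hQ1pos⟩ : (0:ℝ) ∈ Set.Ioo (Q u) (Q 1))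
      have hdle := hub d ⟨by linarith [hxmem.1, hu.1, hd.1], hd.2⟩ hdQ
      linarith [hd.1, hu.1]
    · exfalso
      have := hub u ⟨by linarith [hxmem.1, hu.1], hu.2⟩ h
      linarith [hu.1]
    · exact h
  -- f strictly monotone on [xstar, 1]
  have hmono : StrictMonoOn f (Set.Icc xstar 1) := by
    apply strictMonoOn_of_deriv_pos (convex_Icc xstar 1)
    · exact fun x _ => (hf' x).continuousAt.continuousWithinAt
    · intro x hx
      rw [interior_Icc] at hx
      rw [(hf' x).deriv]
      exact mul_pos hc1pos (hQpos x hx)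
  -- f xstar ≤ 0
  have hfx_le : f xstar ≤ 0 := by
    by_contra hpos
    push_neg at hpos
    have h1x2 : 0 < 1 - xstar^2 := by nlinarith [hxmem.1, hxmem.2]
    have hODE := hODEf xstar
    rw [hxQ] at hODE
    have hRneg : c2 * R xstar < 0 := by
      by_contra hge
      push_neg at hge
      nlinarith [mul_nonneg h1x2.le hge]
    -- slope of c1 * Q at xstar from the right is nonneg
    have hF1' : HasDerivAt (fun t => c1 * Q t) (c1 * (c2 * R xstar)) xstar :=
      (hQ' xstar).const_mul c1
    have hd0 : 0 ≤ c1 * (c2 * R xstar) := by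
      have hW := (hF1'.hasDerivWithinAt (s := Set.Ioo xstar 1))
      have hxnot : xstar ∉ Set.Ioo xstar 1 := fun h => lt_irrefl _ h.1
      have hT := (hasDerivWithinAt_iff_tendsto_slope' hxnot).mp hW
      have hNB : (𝓝[Set.Ioo xstar 1] xstar).NeBot := by
        rw [nhdsWithin_Ioo_eq_nhdsGT hxlt1]
        infer_instance
      refine ge_of_tendsto hT ?_
      filter_upwards [self_mem_nhdsWithin] with y hy
      have h1 : 0 < y - xstar := by linarith [hy.1]
      have h2 : 0 ≤ c1 * Q y := le_of_lt (mul_pos hc1pos (hQpos y hy))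
      rw [slope_def_field]
      rw [hxQ]
      simp only [mul_zero, sub_zero]
      positivity
    nlinarith [mul_pos hc1pos (neg_pos.mpr hRneg)]
  -- the energy function g
  set g : ℝ → ℝ := fun t => lamf * f t^2 + (1-t^2) * (c1 * Q t)^2 with hgdef
  have hg' : ∀ t : ℝ, HasDerivAt g
      (lamf * (2 * f t ^ 1 * (c1 * Q t))
        + ((-(2*t)) * (c1 * Q t)^2 + (1-t^2) * (2 * (c1 * Q t)^1 * (c1 * (c2 * R t))))) t := by
    intro t
    have h1 : HasDerivAt (fun s => lamf * f s^2) (lamf * (2 * f t ^ 1 * (c1 * Q t))) t :=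
      ((hf' t).pow 2).const_mul lamf
    have h2 : HasDerivAt (fun s : ℝ => 1 - s^2) (-(2*t)) t := by
      have := ((hasDerivAt_pow 2 t).const_sub 1)
      simpa using this
    have h3 : HasDerivAt (fun s => (c1 * Q s)^2) (2 * (c1 * Q t)^1 * (c1 * (c2 * R t))) t :=
      ((hQ' t).const_mul c1).pow 2
    exact h1.add (h2.mul h3)
  have hGeq : ∀ t : ℝ,
      lamf * (2 * f t ^ 1 * (c1 * Q t))
        + ((-(2*t)) * (c1 * Q t)^2 + (1-t^2) * (2 * (c1 * Q t)^1 * (c1 * (c2 * R t))))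
      = 2 * (c1 * Q t)^2 * ((α+β+1)*t + (α-β)) := by
    intro t
    linear_combination (2*c1^2*Q t) * (hODEf t) + (2*c1*f t*Q t) * hlamf2
  have hgmono : MonotoneOn g (Set.Icc (0:ℝ) 1) := by
    apply monotoneOn_of_deriv_nonneg (convex_Icc 0 1)
    · exact fun x _ => (hg' x).continuousAt.continuousWithinAt
    · exact fun x _ => ((hg' x).differentiableAt).differentiableWithinAt
    · intro x hx
      rw [interior_Icc] at hx
      rw [(hg' x).deriv, hGeq]
      have h1 : 0 ≤ (α+β+1)*x + (α-β) := by nlinarith [hx.1]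
      exact mul_nonneg (by positivity) h1
  -- main inequality
  have hxI : xstar ∈ Set.Icc (0:ℝ) 1 := ⟨hxpos.le, hxlt1.le⟩
  have hmain : ∀ u ∈ Set.Icc (0:ℝ) 1, f xstar ≤ f u := by
    intro u hu
    rcases le_or_gt u xstar with hle | hlt
    · have hgu : g u ≤ g xstar := hgmono hu hxI hle
      have hgx : g xstar = lamf * f xstar^2 := by
        rw [hgdef]; simp [hxQ]
      have hgu' : lamf * f u^2 ≤ g u := by
        simp only [hgdef]
        have h1 : (0:ℝ) ≤ 1 - u^2 := by nlinarith [hu.1, hu.2]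
        linarith [mul_nonneg h1 (sq_nonneg (c1 * Q u))]
      have hsq : f u^2 ≤ f xstar^2 := by
        rw [hgx] at hgu
        have := le_trans hgu' hgu
        nlinarith
      by_contra hcon
      push_neg at hcon
      have hprod := mul_pos (sub_pos.mpr hcon) (by linarith : (0:ℝ) < -(f xstar + f u))
      nlinarith
    · exact (hmono ⟨le_refl xstar, hxlt1.le⟩ ⟨hlt.le, hu.2⟩ hlt).le
  -- conclude for the normalized polynomial
  have hCpos : 0 < genBinom ((((n+3 : ℕ)) : ℝ) + α) (n+3) := by
    apply genBinom_pos
    intro i hi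
    have : (i:ℝ) ≤ (n:ℝ) + 2 := by exact_mod_cast by omega
    push_cast
    linarith
  constructor
  · exact ⟨xstar, hxI, rfl⟩
  · rintro y ⟨u, hu, rfl⟩
    unfold jacobiPN
    rw [← hfdef, div_le_div_iff₀ hCpos hCpos]
    exact mul_le_mul_of_nonneg_right (hmain u hu) hCpos.le
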